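/- Let M be a maximal ideal of a domain D and I an ideal of a ring of functions R from E to D. Assume that either D/M is not algebraically closed or each function in R takes values in only finitely many residue classes mod M. Then I is contained in an ideal of the form M_F for some filter F on E if and only if I contains no M-unit-valued function (a function f with f(e) + M a unit in D/M for every e ∈ E). -/

import Mathlib

set_option maxHeartbeats 1000000
set_option synthInstance.maxHeartbeats 400000

open Polynomial Finset

theorem stmt10 {D : Type*} [CommRing D] [IsDomain D] {E : Set D}
    (R : Subring (↥E → D)) (hconst : ∀ d : D, (fun _ : ↥E => d) ∈ R)
    (M : Ideal D) [hM : M.IsMaximal]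
    (hyp : (¬ @IsAlgClosed (D ⧸ M) (Ideal.Quotient.field M)) ∨
      ∀ f : R,
        (Set.range fun e : ↥E => Ideal.Quotient.mk M ((f : ↥E → D) e)).Finite)
    (I : Ideal R) :
    (∃ F : Filter ↥E, F.NeBot ∧
        ∀ f ∈ I, {e : ↥E | (f : ↥E → D) e ∈ M} ∈ F) ↔
      ¬ ∃ f ∈ I, ∀ e : ↥E, (f : ↥E → D) e ∉ M := by
  classical
  letI : Field (D ⧸ M) := Ideal.Quotient.field M
  constructor
  · rintro ⟨F, hF, hmem⟩ ⟨f, hfI, hf⟩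
    obtain ⟨e, he⟩ := Filter.nonempty_of_mem (hmem f hfI)
    exact hf e he
  · intro hno
    have hz : ∀ f ∈ I, ∃ e : ↥E, (f : ↥E → D) e ∈ M := by
      intro f hf
      by_contra h
      push_neg at h
      exact hno ⟨f, hf, h⟩
    set ev : ↥E → (R →+* D ⧸ M) :=
      fun e => (Ideal.Quotient.mk M).comp ((Pi.evalRingHom (fun _ => D) e).comp R.subtype)
      with hevdef
    set cf : D → R := fun d => ⟨fun _ => d, hconst d⟩ with hcf
    have hevcf : ∀ (e : ↥E) (d : D), ev e (cf d) = Ideal.Quotient.mk M d := fun _ _ => rfl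
    have hevf : ∀ (e : ↥E) (f : R), ev e f = Ideal.Quotient.mk M ((f : ↥E → D) e) :=
      fun _ _ => rfl
    have key : ∀ f ∈ I, ∀ g ∈ I, ∃ h ∈ I, ∀ e : ↥E,
        ev e h = 0 → ev e f = 0 ∧ ev e g = 0 := by
      rcases hyp with hna | hfin
      · obtain ⟨p, hmono, hirr, hroot⟩ :
            ∃ p : (D ⧸ M)[X], p.Monic ∧ Irreducible p ∧ ∀ x, p.eval x ≠ 0 := by
          by_contra hcon
          push_neg at hcon
          exact hna (IsAlgClosed.of_exists_root _ fun q hm hi => hcon q hm hi)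
        set n := p.natDegree with hn
        have hnpos : 0 < n := by
          rcases Nat.eq_zero_or_pos n with h0 | h
          · exact absurd (hmono.natDegree_eq_zero.mp h0 ▸ hirr)
              not_irreducible_one
          · exact h
        choose c hc using fun i => Ideal.Quotient.mk_surjective (I := M) (p.coeff i)
        intro f hf g hg
        refine ⟨∑ i ∈ Finset.range (n + 1), cf (c i) * f ^ i * g ^ (n - i), ?_, ?_⟩
        · refine Ideal.sum_mem _ fun i _ => ?_
          rcases Nat.eq_zero_or_pos i with rfl | hipos
          · exact I.mul_mem_left _ (I.pow_mem_of_mem hg _ (by simpa using hnpos))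
          · exact I.mul_mem_right _ (I.mul_mem_left _ (I.pow_mem_of_mem hf _ hipos))
        · intro e he
          set x := ev e f with hx
          set y := ev e g with hy
          have hhe : ∑ i ∈ Finset.range (n + 1), p.coeff i * x ^ i * y ^ (n - i) = 0 := by
            simpa [map_sum, map_mul, map_pow, hevcf, hc] using he
          have hy0 : y = 0 := by
            by_contra hy0
            refine hroot (x / y) ?_
            have h1 : y ^ n * p.eval (x / y) = 0 := by
              rw [Polynomial.eval_eq_sum_range, Finset.mul_sum, ← hhe]
              refine Finset.sum_congr rfl fun i hi => ?_
              have hi' : i ≤ n := Nat.lt_succ_iff.mp (Finset.mem_range.mp hi)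
              have hyn : y ^ n = y ^ (n - i) * y ^ i := by
                rw [← pow_add, Nat.sub_add_cancel hi']
              rw [hyn, div_pow]
              field_simp
            rcases mul_eq_zero.mp h1 with h | h
            · exact absurd h (pow_ne_zero _ hy0)
            · exact h
          have hx0 : x = 0 := by
            rw [Finset.sum_eq_single n] at hhe
            · have : x ^ n = 0 := by
                simpa [show p.coeff n = 1 from hmono.coeff_natDegree, hy0, Nat.sub_self] using hhe
              exact pow_eq_zero_iff hnpos.ne'  |>.mp this
            · intro i hi hine
              have hi' : i < n := lt_of_le_of_ne (Nat.lt_succ_iff.mp (Finset.mem_range.mp hi)) hine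
              have : n - i ≠ 0 := Nat.sub_ne_zero_of_lt hi'
              simp [hy0, zero_pow this]
            · intro h
              exact absurd (Finset.self_mem_range_succ n) h
          exact ⟨hx0, hy0⟩
      · choose dinv hdinv using fun c : D ⧸ M => Ideal.Quotient.mk_surjective (I := M) c⁻¹
        have unit01 : ∀ f ∈ I, ∃ f' ∈ I, ∀ e : ↥E,
            (ev e f' = 0 ↔ ev e f = 0) ∧ (ev e f' = 0 ∨ ev e f' = 1) := by
          intro f hf
          have hS := hfin f
          set S0 := hS.toFinset.filter (· ≠ 0) with hS0
          have hmemI : ∀ s : Finset (D ⧸ M),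
              (1 : R) - ∏ c ∈ s, (1 - cf (dinv c) * f) ∈ I := by
            intro s
            induction s using Finset.induction with
            | empty => simp
            | @insert a s hns ih =>
              rw [Finset.prod_insert hns]
              have heq : (1 : R) - (1 - cf (dinv a) * f) * ∏ c ∈ s, (1 - cf (dinv c) * f)
                  = ((1 : R) - ∏ c ∈ s, (1 - cf (dinv c) * f))
                    + cf (dinv a) * (∏ c ∈ s, (1 - cf (dinv c) * f)) * f := by ring
              rw [heq]
              exact I.add_mem ih (I.mul_mem_left _ hf)
          refine ⟨_, hmemI S0, fun e => ?_⟩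
          set x := ev e f with hx
          have hval : ev e ((1 : R) - ∏ c ∈ S0, (1 - cf (dinv c) * f))
              = 1 - ∏ c ∈ S0, (1 - c⁻¹ * x) := by
            rw [map_sub, map_one, map_prod]
            congr 1
            exact Finset.prod_congr rfl fun c _ => by
              rw [map_sub, map_one, map_mul, hevcf, hdinv]
          by_cases hx0 : x = 0
          · have hone : ∏ c ∈ S0, (1 - c⁻¹ * x) = 1 :=
              Finset.prod_eq_one fun c _ => by rw [hx0, mul_zero, sub_zero]
            rw [hval, hone]
            simp [hx0]
          · have hxS : x ∈ S0 := by
              rw [hS0, Finset.mem_filter, Set.Finite.mem_toFinset]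
              exact ⟨⟨e, rfl⟩, hx0⟩
            have hzero : ∏ c ∈ S0, (1 - c⁻¹ * x) = 0 :=
              Finset.prod_eq_zero hxS (by rw [inv_mul_cancel₀ hx0, sub_self])
            rw [hval, hzero, sub_zero]
            simp [hx0]
        intro f hf g hg
        obtain ⟨f', hf'I, hf'⟩ := unit01 f hf
        obtain ⟨g', hg'I, hg'⟩ := unit01 g hg
        refine ⟨f' + g' - f' * g',
          sub_mem (I.add_mem hf'I hg'I) (I.mul_mem_left _ hg'I), fun e he => ?_⟩
        rw [map_sub, map_add, map_mul] at he
        rcases (hf' e).2 with ha | ha <;> rcases (hg' e).2 with hb | hb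
        · exact ⟨(hf' e).1.mp ha, (hg' e).1.mp hb⟩
        · rw [ha, hb] at he; norm_num at he
        · rw [ha, hb] at he; norm_num at he
        · rw [ha, hb] at he; norm_num at he
    haveI hne : Nonempty I := ⟨⟨0, I.zero_mem⟩⟩
    haveI hnb : ∀ f : I, (Filter.principal {e : ↥E | ((f : R) : ↥E → D) e ∈ M}).NeBot :=
      fun f => Filter.principal_neBot_iff.mpr (hz f.1 f.2)
    have hdir : Directed (· ≥ ·)
        (fun f : I => Filter.principal {e : ↥E | ((f : R) : ↥E → D) e ∈ M}) := by
      rintro f g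
      obtain ⟨h, hhI, hh⟩ := key f.1 f.2 g.1 g.2
      refine ⟨⟨h, hhI⟩, ?_, ?_⟩
      · refine Filter.principal_mono.mpr fun e he => ?_
        exact Ideal.Quotient.eq_zero_iff_mem.mp
          ((hh e (Ideal.Quotient.eq_zero_iff_mem.mpr he)).1)
      · refine Filter.principal_mono.mpr fun e he => ?_
        exact Ideal.Quotient.eq_zero_iff_mem.mp
          ((hh e (Ideal.Quotient.eq_zero_iff_mem.mpr he)).2)
    refine ⟨⨅ f : I, Filter.principal {e : ↥E | ((f : R) : ↥E → D) e ∈ M},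
      Filter.iInf_neBot_of_directed' hdir fun f => hnb f, ?_⟩
    intro f hf
    exact Filter.mem_iInf_of_mem ⟨f, hf⟩ (Filter.mem_principal_self _)
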